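/- arXiv:2505.01357 — 2 statements merged into one kernel-verified Lean document; each statement's English description precedes it below -/
import Mathlib

section
/- Let A, Ã ∈ ℝ^{p×r} each have orthonormal columns, let U ∈ ℝ^{r×r} be orthogonal, and define D(Ã,A)² := 1 − (1/r)·tr(AAᵀÃÃᵀ). Then D(Ã,A)² ≤ 2‖Ã − AU‖², where ‖·‖ is the spectral norm. -/
open Matrix
open scoped Matrix.Norms.L2Operator


-- trace of BᵀB is sum of squares
lemma trace_transpose_mul_self {m n : ℕ} (B : Matrix (Fin m) (Fin n) ℝ) :
    (Bᵀ * B).trace = ∑ j, ∑ i, (B i j) ^ 2 := by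
  simp [Matrix.trace, Matrix.diag, Matrix.mul_apply, sq]

lemma trace_transpose_mul_self_nonneg {m n : ℕ} (B : Matrix (Fin m) (Fin n) ℝ) :
    0 ≤ (Bᵀ * B).trace := by
  rw [trace_transpose_mul_self]
  exact Finset.sum_nonneg fun j _ => Finset.sum_nonneg fun i _ => sq_nonneg _

lemma col_sq_sum_le {m n : ℕ} (B : Matrix (Fin m) (Fin n) ℝ) (j : Fin n) :
    ∑ i, (B i j) ^ 2 ≤ ‖B‖ ^ 2 := by
  have h := B.l2_opNorm_mulVec (EuclideanSpace.single j (1 : ℝ))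
  have hx : ‖EuclideanSpace.single j (1 : ℝ)‖ = 1 := by
    simp [EuclideanSpace.norm_single]
  rw [hx, mul_one] at h
  have hnn : (0 : ℝ) ≤ ‖(EuclideanSpace.equiv (Fin m) ℝ).symm (B *ᵥ (EuclideanSpace.single j (1:ℝ)))‖ := norm_nonneg _
  have h2 : ‖(EuclideanSpace.equiv (Fin m) ℝ).symm (B *ᵥ (EuclideanSpace.single j (1:ℝ)))‖ ^ 2 ≤ ‖B‖ ^ 2 := by
    exact pow_le_pow_left₀ hnn h 2
  refine le_trans (le_of_eq ?_) h2
  rw [EuclideanSpace.norm_eq]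
  rw [Real.sq_sqrt (Finset.sum_nonneg fun i _ => by positivity)]
  congr 1
  ext i
  have : (B *ᵥ (EuclideanSpace.single j (1:ℝ) : EuclideanSpace ℝ (Fin n))) i = B i j := by
    simp [Matrix.mulVec, dotProduct, EuclideanSpace.single_apply]
  simp [this, sq, abs_mul_abs_self]


/-- For `A, Ã ∈ ℝ^{p×r}` with orthonormal columns, `U` orthogonal, with
`D(Ã,A)² := 1 − (1/r)·tr(AAᵀÃÃᵀ)`, we have `D(Ã,A)² ≤ 2‖Ã − AU‖²` in the
spectral norm. -/
theorem stmt5 (p r : ℕ) (hr : 0 < r)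
    (A At : Matrix (Fin p) (Fin r) ℝ) (U : Matrix (Fin r) (Fin r) ℝ)
    (hA : Aᵀ * A = 1) (hAt : Atᵀ * At = 1) (hU : Uᵀ * U = 1) :
    1 - (1 / (r : ℝ)) * (A * Aᵀ * (At * Atᵀ)).trace ≤ 2 * ‖At - A * U‖ ^ 2 := by
  set E := At - A * U with hE
  set M := Aᵀ * At with hM
  have hAE : Aᵀ * E = M - U := by
    rw [hE, Matrix.mul_sub, ← Matrix.mul_assoc, hA, Matrix.one_mul]
  have key1 : Eᵀ * E - (Aᵀ * E)ᵀ * (Aᵀ * E) = 1 - Mᵀ * M := by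
    have hEE : Eᵀ * E = 1 - Mᵀ * U - Uᵀ * M + 1 := by
      rw [hE]
      simp only [Matrix.transpose_sub, Matrix.transpose_mul, Matrix.sub_mul, Matrix.mul_sub]
      rw [hAt, hM]
      have h1 : Uᵀ * Aᵀ * (A * U) = 1 := by
        rw [Matrix.mul_assoc Uᵀ, ← Matrix.mul_assoc Aᵀ, hA, Matrix.one_mul, hU]
      have h2 : Uᵀ * Aᵀ * At = Uᵀ * (Aᵀ * At) := Matrix.mul_assoc _ _ _
      have h3 : Atᵀ * (A * U) = (Aᵀ * At)ᵀ * U := by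
        rw [Matrix.transpose_mul, Matrix.transpose_transpose, Matrix.mul_assoc]
      rw [h1, h2, h3]
      abel
    have hAEE : (Aᵀ * E)ᵀ * (Aᵀ * E) = Mᵀ * M - Mᵀ * U - Uᵀ * M + 1 := by
      rw [hAE]
      simp only [Matrix.transpose_sub, Matrix.sub_mul, Matrix.mul_sub]
      rw [hU]
      abel
    rw [hEE, hAEE]
    abel
  have key2 : (r : ℝ) - (A * Aᵀ * (At * Atᵀ)).trace
      = (Eᵀ * E).trace - ((Aᵀ * E)ᵀ * (Aᵀ * E)).trace := by
    have := congrArg Matrix.trace key1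
    rw [Matrix.trace_sub, Matrix.trace_sub, Matrix.trace_one] at this
    rw [this]
    congr 1
    · simp
    · rw [hM, Matrix.transpose_mul, Matrix.transpose_transpose]
      have h4 : (Atᵀ * A * (Aᵀ * At)).trace = (A * (Aᵀ * (At * Atᵀ))).trace := by
        rw [Matrix.mul_assoc, Matrix.trace_mul_comm]
        simp only [Matrix.mul_assoc]
      rw [h4, Matrix.mul_assoc]
  have hEEb : (Eᵀ * E).trace ≤ (r : ℝ) * ‖E‖ ^ 2 := by
    rw [trace_transpose_mul_self]
    calc ∑ j, ∑ i, (E i j) ^ 2 ≤ ∑ _j : Fin r, ‖E‖ ^ 2 :=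
          Finset.sum_le_sum fun j _ => col_sq_sum_le E j
      _ = (r : ℝ) * ‖E‖ ^ 2 := by simp [Finset.sum_const, mul_comm]
  have hmain : (r : ℝ) - (A * Aᵀ * (At * Atᵀ)).trace ≤ (r : ℝ) * ‖E‖ ^ 2 := by
    rw [key2]
    have := trace_transpose_mul_self_nonneg (Aᵀ * E)
    linarith
  have hrpos : (0 : ℝ) < r := by exact_mod_cast hr
  have h1 : 1 - (1 / (r : ℝ)) * (A * Aᵀ * (At * Atᵀ)).trace ≤ ‖E‖ ^ 2 := by
    have heq : 1 - (1 / (r : ℝ)) * (A * Aᵀ * (At * Atᵀ)).trace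
        = ((r : ℝ) - (A * Aᵀ * (At * Atᵀ)).trace) / r := by
      field_simp
    rw [heq, div_le_iff₀ hrpos]
    nlinarith [hmain]
  have := sq_nonneg ‖E‖
  linarith
end

section
/- Let Y ∈ ℝ^{n×p} and Ỹ ∈ ℝ^{n×q} with ỸᵀỸ invertible, set Π := Ỹ(ỸᵀỸ)⁻¹Ỹᵀ and M := Yᵀ Π Y (a symmetric positive semidefinite p×p matrix). Then for r ≤ p, the constrained least squares problem min over H ∈ ℝ^{q×r} and A ∈ ℝ^{p×r} with AᵀA = I_r of ‖Y − ỸHAᵀ‖_F² has optimal value ‖Y‖_F² − Σ_{i=1}^{r} λ_i(M), where λ_1(M) ≥ … ≥ λ_p(M) are the eigenvalues of M, and the minimum is attained by taking the columns of A to be r orthonormal eigenvectors of M corresponding to its r largest eigenvalues (with H = (ỸᵀỸ)⁻¹ỸᵀYA). -/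
open Matrix

/-- Squared Frobenius norm of a real matrix. -/
def frobSq {m n : ℕ} (M : Matrix (Fin m) (Fin n) ℝ) : ℝ := ∑ i, ∑ j, (M i j) ^ 2

lemma frobSq_eq_trace {a b : ℕ} (X : Matrix (Fin a) (Fin b) ℝ) :
    frobSq X = Matrix.trace (Xᵀ * X) := by
  simp only [frobSq, Matrix.trace, Matrix.diag, Matrix.mul_apply, Matrix.transpose_apply, sq]
  rw [Finset.sum_comm]

lemma frobSq_nonneg {a b : ℕ} (X : Matrix (Fin a) (Fin b) ℝ) : 0 ≤ frobSq X :=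
  Finset.sum_nonneg fun _ _ => Finset.sum_nonneg fun _ _ => sq_nonneg _

lemma expand_key {n p q r : ℕ} (Y : Matrix (Fin n) (Fin p) ℝ) (Yt : Matrix (Fin n) (Fin q) ℝ)
    (Gi : Matrix (Fin q) (Fin q) ℝ) (hGi : Gi * (Ytᵀ * Yt) = 1)
    (hGis : Giᵀ = Gi)
    (H : Matrix (Fin q) (Fin r) ℝ) (A : Matrix (Fin p) (Fin r) ℝ) (hA : Aᵀ * A = 1) :
    Matrix.trace ((Y - Yt*H*Aᵀ)ᵀ * (Y - Yt*H*Aᵀ)) =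
      Matrix.trace (Yᵀ*Y)
      + Matrix.trace ((Yt*H - Yt*(Gi*Ytᵀ*Y*A))ᵀ * (Yt*H - Yt*(Gi*Ytᵀ*Y*A)))
      - Matrix.trace (Aᵀ * (Yᵀ * (Yt * Gi * Ytᵀ) * Y) * A) := by
  have hAc : ∀ {k : ℕ} (X : Matrix (Fin r) (Fin k) ℝ), Aᵀ * (A * X) = X := fun X => by
    rw [← Matrix.mul_assoc, hA, Matrix.one_mul]
  have hGc : ∀ {k : ℕ} (X : Matrix (Fin q) (Fin k) ℝ), Gi * (Ytᵀ * (Yt * X)) = X := fun X => by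
    rw [← Matrix.mul_assoc Ytᵀ Yt X, ← Matrix.mul_assoc, hGi, Matrix.one_mul]
  set W : Matrix (Fin q) (Fin r) ℝ := Gi*Ytᵀ*Y*A with hW
  set b : ℝ := Matrix.trace (Hᵀ * Ytᵀ * Y * A) with hb
  set g : ℝ := Matrix.trace (Hᵀ * (Ytᵀ*Yt) * H) with hg
  set m : ℝ := Matrix.trace (Aᵀ * (Yᵀ * (Yt * Gi * Ytᵀ) * Y) * A) with hm
  have T1 : Matrix.trace ((Yt*H*Aᵀ)ᵀ * Y) = b := by
    have e : (Yt*H*Aᵀ)ᵀ * Y = A * (Hᵀ * (Ytᵀ * Y)) := by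
      simp [Matrix.transpose_mul, Matrix.mul_assoc]
    rw [e, Matrix.trace_mul_comm, hb]; congr 1; simp [Matrix.mul_assoc]
  have T2 : Matrix.trace (Yᵀ * (Yt*H*Aᵀ)) = b := by
    rw [← Matrix.trace_transpose (Yᵀ * (Yt*H*Aᵀ)), Matrix.transpose_mul,
      Matrix.transpose_transpose, T1]
  have T3 : Matrix.trace ((Yt*H*Aᵀ)ᵀ * (Yt*H*Aᵀ)) = g := by
    rw [Matrix.trace_mul_comm]
    have e : (Yt*H*Aᵀ) * (Yt*H*Aᵀ)ᵀ = (Yt*H) * (Yt*H)ᵀ := by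
      simp only [Matrix.transpose_mul, Matrix.transpose_transpose, Matrix.mul_assoc]
      rw [hAc]
    rw [e, Matrix.trace_mul_comm, hg]; congr 1
    simp [Matrix.transpose_mul, Matrix.mul_assoc]
  have T0 : Matrix.trace ((Yt*H)ᵀ * (Yt*H)) = g := by
    rw [hg]; congr 1; simp [Matrix.transpose_mul, Matrix.mul_assoc]
  have T4 : Matrix.trace ((Yt*W)ᵀ * (Yt*H)) = b := by
    have e : (Yt*W)ᵀ * (Yt*H) = Aᵀ * (Yᵀ * (Yt * H)) := by
      rw [hW]
      simp only [Matrix.transpose_mul, Matrix.transpose_transpose, hGis, Matrix.mul_assoc]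
      rw [hGc]
    rw [e, ← Matrix.trace_transpose, hb]; congr 1
    simp [Matrix.transpose_mul, Matrix.mul_assoc]
  have T5 : Matrix.trace ((Yt*H)ᵀ * (Yt*W)) = b := by
    rw [← Matrix.trace_transpose, Matrix.transpose_mul, Matrix.transpose_transpose, T4]
  have T6 : Matrix.trace ((Yt*W)ᵀ * (Yt*W)) = m := by
    have e : (Yt*W)ᵀ * (Yt*W) = Aᵀ * (Yᵀ * (Yt * (Gi * (Ytᵀ * (Y * A))))) := by
      rw [hW]
      simp only [Matrix.transpose_mul, Matrix.transpose_transpose, hGis, Matrix.mul_assoc]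
      rw [hGc]
    rw [e, hm]; congr 1; simp [Matrix.mul_assoc]
  have L : Matrix.trace ((Y - Yt*H*Aᵀ)ᵀ * (Y - Yt*H*Aᵀ))
      = Matrix.trace (Yᵀ*Y) - b - b + g := by
    simp only [Matrix.transpose_sub, Matrix.sub_mul, Matrix.mul_sub, Matrix.trace_sub]
    rw [T1, T2, T3]; ring
  have R : Matrix.trace ((Yt*H - Yt*W)ᵀ * (Yt*H - Yt*W)) = g - b - b + m := by
    simp only [Matrix.transpose_sub, Matrix.sub_mul, Matrix.mul_sub, Matrix.trace_sub]
    rw [T0, T4, T5, T6]; ring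
  rw [L, R]; ring

lemma sum_ite_lt {p r : ℕ} (hr : r ≤ p) (f : Fin p → ℝ) :
    ∑ i : Fin p, (if (i : ℕ) < r then f i else 0) = ∑ j : Fin r, f (Fin.castLE hr j) := by
  have hF := Fin.sum_univ_eq_sum_range
    (fun k => if h : k < p then (if k < r then f ⟨k, h⟩ else 0) else 0) p
  have hG := Fin.sum_univ_eq_sum_range
    (fun k => if h : k < p then f ⟨k, h⟩ else 0) r
  have e1 : ∑ i : Fin p, (if (i : ℕ) < r then f i else 0)
      = ∑ k ∈ Finset.range p, (if h : k < p then (if k < r then f ⟨k, h⟩ else 0) else 0) := by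
    rw [← hF]
    exact Finset.sum_congr rfl fun i _ => by simp [i.isLt]
  have e2 : ∑ j : Fin r, f (Fin.castLE hr j)
      = ∑ k ∈ Finset.range r, (if h : k < p then f ⟨k, h⟩ else 0) := by
    rw [← hG]
    refine Finset.sum_congr rfl fun j _ => ?_
    have hj : (j : ℕ) < p := lt_of_lt_of_le j.isLt hr
    simp only [dif_pos hj]
    rfl
  rw [e1, e2]
  rw [← Finset.sum_subset (Finset.range_subset_range.mpr hr)]
  · refine Finset.sum_congr rfl fun k hk => ?_
    have hkr : k < r := Finset.mem_range.mp hk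
    have hkp : k < p := lt_of_lt_of_le hkr hr
    simp [hkp, hkr]
  · intro k hk hk'
    have : ¬ k < r := fun h => hk' (Finset.mem_range.mpr h)
    by_cases hkp : k < p <;> simp [hkp, this]

lemma majorize {p r : ℕ} (hr : r ≤ p) (μ : Fin p → ℝ) (hμ : Antitone μ)
    (s : Fin p → ℝ) (h0 : ∀ i, 0 ≤ s i) (h1 : ∀ i, s i ≤ 1) (hs : ∑ i, s i = r) :
    ∑ i, μ i * s i ≤ ∑ i : Fin r, μ (Fin.castLE hr i) := by
  rcases Nat.eq_zero_or_pos r with hr0 | hr0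
  · subst hr0
    have hz : ∀ i ∈ Finset.univ, s i = 0 :=
      (Finset.sum_eq_zero_iff_of_nonneg (fun i _ => h0 i)).mp (by simpa using hs)
    have hz2 : ∑ i, μ i * s i = 0 :=
      Finset.sum_eq_zero fun i hi => by rw [hz i hi, mul_zero]
    simp only [Finset.univ_eq_empty, Finset.sum_empty]
    exact le_of_eq hz2
  · have hrp : r - 1 < p := by omega
    set c : ℝ := μ ⟨r - 1, hrp⟩ with hc
    have key : ∀ i : Fin p, μ i * s i ≤ c * s i + (if (i : ℕ) < r then μ i - c else 0) := by
      intro i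
      by_cases hi : (i : ℕ) < r
      · have hmc : c ≤ μ i := hμ (by rw [Fin.le_def]; simp; omega)
        simp only [if_pos hi]
        nlinarith [h1 i, h0 i]
      · have hmc : μ i ≤ c := hμ (by rw [Fin.le_def]; simp; omega)
        simp only [if_neg hi]
        nlinarith [h0 i]
    calc ∑ i, μ i * s i ≤ ∑ i, (c * s i + (if (i : ℕ) < r then μ i - c else 0)) :=
          Finset.sum_le_sum fun i _ => key i
      _ = c * r + ∑ j : Fin r, (μ (Fin.castLE hr j) - c) := by
          rw [Finset.sum_add_distrib, ← Finset.mul_sum, hs, sum_ite_lt hr (fun i => μ i - c)]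
      _ = ∑ j : Fin r, μ (Fin.castLE hr j) := by
          rw [Finset.sum_sub_distrib, Finset.sum_const, Finset.card_univ, Fintype.card_fin,
            nsmul_eq_mul]
          ring

lemma trace_bound {p r : ℕ} (hr : r ≤ p) (V : Matrix (Fin p) (Fin p) ℝ) (μ : Fin p → ℝ)
    (hV : Vᵀ * V = 1) (hμ : Antitone μ) (A : Matrix (Fin p) (Fin r) ℝ) (hA : Aᵀ * A = 1) :
    Matrix.trace (Aᵀ * (V * Matrix.diagonal μ * Vᵀ) * A) ≤ ∑ i : Fin r, μ (Fin.castLE hr i) := by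
  have hVV : V * Vᵀ = 1 := mul_eq_one_comm.mp hV
  set B : Matrix (Fin p) (Fin r) ℝ := Vᵀ * A with hBdef
  have hB : Bᵀ * B = 1 := by
    rw [hBdef, Matrix.transpose_mul, Matrix.transpose_transpose, Matrix.mul_assoc,
      ← Matrix.mul_assoc V Vᵀ A, hVV, Matrix.one_mul, hA]
  have e : Aᵀ * (V * Matrix.diagonal μ * Vᵀ) * A = Bᵀ * Matrix.diagonal μ * B := by
    rw [hBdef, Matrix.transpose_mul, Matrix.transpose_transpose]
    simp [Matrix.mul_assoc]
  set s : Fin p → ℝ := fun i => ∑ j, (B i j)^2 with hs_def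
  have hseq : ∀ i, s i = (B * Bᵀ) i i := by
    intro i
    simp [hs_def, Matrix.mul_apply, Matrix.transpose_apply, sq]
  have htr : Matrix.trace (Bᵀ * Matrix.diagonal μ * B) = ∑ i, μ i * s i := by
    rw [Matrix.trace_mul_cycle]
    simp only [Matrix.trace, Matrix.diag, Matrix.mul_diagonal]
    exact Finset.sum_congr rfl fun i _ => by rw [hseq i]; ring
  have h0 : ∀ i, 0 ≤ s i := fun i => Finset.sum_nonneg fun j _ => sq_nonneg _
  have hsum : ∑ i, s i = r := by
    rw [hs_def]
    rw [show (∑ i, ∑ j, (B i j)^2) = Matrix.trace (Bᵀ * B) from frobSq_eq_trace B, hB,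
      Matrix.trace_one]
    simp
  have hPP : (B * Bᵀ) * (B * Bᵀ) = B * Bᵀ := by
    rw [Matrix.mul_assoc, ← Matrix.mul_assoc Bᵀ B Bᵀ, hB, Matrix.one_mul]
  have h1 : ∀ i, s i ≤ 1 := by
    intro i
    have hsym : (B * Bᵀ)ᵀ = B * Bᵀ := by
      rw [Matrix.transpose_mul, Matrix.transpose_transpose]
    have hexp : (B * Bᵀ) i i = ∑ j, ((B * Bᵀ) i j)^2 := by
      conv_lhs => rw [← hPP]
      rw [Matrix.mul_apply]
      refine Finset.sum_congr rfl fun j _ => ?_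
      have : (B * Bᵀ) j i = (B * Bᵀ) i j := by
        conv_rhs => rw [← hsym]
        rw [Matrix.transpose_apply]
      rw [this, sq]
    have hge : ((B * Bᵀ) i i)^2 ≤ (B * Bᵀ) i i := by
      conv_rhs => rw [hexp]
      exact Finset.single_le_sum (f := fun j => ((B * Bᵀ) i j)^2)
        (fun j _ => sq_nonneg _) (Finset.mem_univ i)
    rw [hseq i]
    nlinarith [h0 i, hseq i]
  rw [e, htr]
  exact majorize hr μ hμ s h0 h1 hsum

/-- With `Π = Ỹ(ỸᵀỸ)⁻¹Ỹᵀ` and `M = YᵀΠY = V diag(μ) Vᵀ` (V orthogonal, μ in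
decreasing order), the constrained problem `min ‖Y − ỸHAᵀ‖_F²` over `H` and
`AᵀA = I_r` has optimal value `‖Y‖_F² − Σ_{i=1}^r λ_i(M)`, attained when the
columns of `A` are the top-`r` eigenvectors and `H = (ỸᵀỸ)⁻¹ỸᵀYA`. -/
theorem stmt12 (n p q r : ℕ) (hr : r ≤ p)
    (Y : Matrix (Fin n) (Fin p) ℝ) (Yt : Matrix (Fin n) (Fin q) ℝ)
    (hinv : IsUnit (Ytᵀ * Yt))
    (V : Matrix (Fin p) (Fin p) ℝ) (μ : Fin p → ℝ)
    (hV : Vᵀ * V = 1) (hμ : Antitone μ)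
    (hM : Yᵀ * (Yt * (Ytᵀ * Yt)⁻¹ * Ytᵀ) * Y = V * Matrix.diagonal μ * Vᵀ) :
    (∀ (H : Matrix (Fin q) (Fin r) ℝ) (A : Matrix (Fin p) (Fin r) ℝ), Aᵀ * A = 1 →
      frobSq Y - ∑ i : Fin r, μ (Fin.castLE hr i) ≤ frobSq (Y - Yt * H * Aᵀ)) ∧
    frobSq (Y - Yt * ((Ytᵀ * Yt)⁻¹ * Ytᵀ * Y * (V.submatrix id (Fin.castLE hr))) *
        (V.submatrix id (Fin.castLE hr))ᵀ) =
      frobSq Y - ∑ i : Fin r, μ (Fin.castLE hr i) := by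
  have hdet : IsUnit (Ytᵀ * Yt).det := (Matrix.isUnit_iff_isUnit_det _).mp hinv
  have hGi : (Ytᵀ * Yt)⁻¹ * (Ytᵀ * Yt) = 1 := Matrix.nonsing_inv_mul _ hdet
  have hGis : ((Ytᵀ * Yt)⁻¹)ᵀ = (Ytᵀ * Yt)⁻¹ := by
    rw [Matrix.transpose_nonsing_inv]
    congr 1
    rw [Matrix.transpose_mul, Matrix.transpose_transpose]
  -- general value formula
  have key : ∀ (H : Matrix (Fin q) (Fin r) ℝ) (A : Matrix (Fin p) (Fin r) ℝ), Aᵀ * A = 1 →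
      frobSq (Y - Yt * H * Aᵀ) =
        frobSq Y
        + frobSq (Yt*H - Yt*((Ytᵀ * Yt)⁻¹*Ytᵀ*Y*A))
        - Matrix.trace (Aᵀ * (V * Matrix.diagonal μ * Vᵀ) * A) := by
    intro H A hA
    rw [frobSq_eq_trace, frobSq_eq_trace, frobSq_eq_trace,
      expand_key Y Yt ((Ytᵀ * Yt)⁻¹) hGi hGis H A hA, hM]
  constructor
  · intro H A hA
    rw [key H A hA]
    have h1 := trace_bound hr V μ hV hμ A hA
    have h2 := frobSq_nonneg (Yt*H - Yt*((Ytᵀ * Yt)⁻¹*Ytᵀ*Y*A))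
    linarith
  · set e : Fin r → Fin p := Fin.castLE hr with he
    set A₀ : Matrix (Fin p) (Fin r) ℝ := V.submatrix id e with hA₀def
    have hA₀ : A₀ᵀ * A₀ = 1 := by
      ext i j
      have : (A₀ᵀ * A₀) i j = (Vᵀ * V) (e i) (e j) := by
        simp [hA₀def, Matrix.mul_apply, Matrix.transpose_apply, Matrix.submatrix_apply]
      rw [this, hV]
      simp [Matrix.one_apply, Fin.castLE_inj, e]
    have hC : Vᵀ * A₀ = (1 : Matrix (Fin p) (Fin p) ℝ).submatrix id e := by
      have h' : Vᵀ * A₀ = (Vᵀ * V).submatrix id e := by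
        ext i j
        simp [hA₀def, Matrix.mul_apply, Matrix.submatrix_apply]
      rw [h', hV]
    have htrace : Matrix.trace (A₀ᵀ * (V * Matrix.diagonal μ * Vᵀ) * A₀)
        = ∑ i : Fin r, μ (e i) := by
      have eq1 : A₀ᵀ * (V * Matrix.diagonal μ * Vᵀ) * A₀
          = (Vᵀ * A₀)ᵀ * Matrix.diagonal μ * (Vᵀ * A₀) := by
        rw [Matrix.transpose_mul, Matrix.transpose_transpose]
        simp [Matrix.mul_assoc]
      rw [eq1, hC]
      simp only [Matrix.trace, Matrix.diag, Matrix.mul_apply, Matrix.transpose_apply,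
        Matrix.submatrix_apply, Matrix.diagonal_apply, Matrix.one_apply, id_eq]
      refine Finset.sum_congr rfl fun j _ => ?_
      simp [Finset.sum_ite_eq, Finset.mul_sum]
    rw [key _ A₀ hA₀, htrace]
    have hres : Yt * ((Ytᵀ * Yt)⁻¹ * Ytᵀ * Y * A₀)
        - Yt * ((Ytᵀ * Yt)⁻¹ * Ytᵀ * Y * A₀) = 0 := sub_self _
    rw [hres]
    have h0 : frobSq (0 : Matrix (Fin n) (Fin r) ℝ) = 0 := by
      simp [frobSq]
    rw [h0]
    ring
end
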